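/- Let (S, f) be a Frobenius GNS in ℕ_0^d. Then S is almost symmetric if and only if for every gap h ∈ H(S), either f − h ∈ S or f − h ∈ PF(S). -/

import Mathlib

open scoped BigOperators

/-- A generalized numerical semigroup: a submonoid of `ℕ^d` with finite complement. -/
def IsGNS {d : ℕ} (S : Set (Fin d → ℕ)) : Prop :=
  (0 : Fin d → ℕ) ∈ S ∧ (∀ x y : Fin d → ℕ, x ∈ S → y ∈ S → x + y ∈ S) ∧ Sᶜ.Finite

/-- The genus: number of gaps. -/
noncomputable def genus {d : ℕ} (S : Set (Fin d → ℕ)) : ℕ := Sᶜ.ncard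

/-- Pseudo-Frobenius elements. -/
def PF {d : ℕ} (S : Set (Fin d → ℕ)) : Set (Fin d → ℕ) :=
  {h | h ∉ S ∧ ∀ s ∈ S, s ≠ 0 → h + s ∈ S}

/-- The type: number of pseudo-Frobenius elements. -/
noncomputable def typ {d : ℕ} (S : Set (Fin d → ℕ)) : ℕ := (PF S).ncard

/-- Maximal elements of a set with respect to a relation. -/
def Maximals {α : Type*} (le : α → α → Prop) (X : Set α) : Set α :=
  {x ∈ X | ∀ y ∈ X, le x y → x = y}

/-- `f` is the unique maximal element of the set of gaps w.r.t. the componentwise order. -/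
def IsFrobenius {d : ℕ} (S : Set (Fin d → ℕ)) (f : Fin d → ℕ) : Prop :=
  Maximals (· ≤ ·) Sᶜ = {f}

/-- Almost symmetric: `2 g(S) + 1 - t(S) = ∏ (h i + 1)` for some gap `h`. -/
def AlmostSymmetric {d : ℕ} (S : Set (Fin d → ℕ)) : Prop :=
  ∃ h ∉ S, 2 * genus S + 1 = typ S + ∏ i, (h i + 1)

/-- Special gaps. -/
def SG {d : ℕ} (S : Set (Fin d → ℕ)) : Set (Fin d → ℕ) :=
  {h ∈ PF S | h + h ∈ S}

/-- The partial order `≤_S` : `y ≤_S x` iff `x - y ∈ S`. -/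
def leS {d : ℕ} (S : Set (Fin d → ℕ)) (x y : Fin d → ℕ) : Prop :=
  ∃ s ∈ S, x + s = y

/-- The Apéry set of `S` with respect to `n`. -/
def Ap {d : ℕ} (S : Set (Fin d → ℕ)) (n : Fin d → ℕ) : Set (Fin d → ℕ) :=
  {s ∈ S | ¬ ∃ u ∈ S, u + n = s}

/-- The reduced Apéry set of `S` with respect to `n`. -/
def Cred {d : ℕ} (S : Set (Fin d → ℕ)) (n : Fin d → ℕ) : Set (Fin d → ℕ) :=
  {s ∈ Ap S n | ∃ h, h ∉ S ∧ s ≤ h + n}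

/-- A monomial order on `ℕ^d` given by its strict-order relation. -/
def IsMonomialOrder (d : ℕ) (lt : (Fin d → ℕ) → (Fin d → ℕ) → Prop) : Prop :=
  (∀ a, ¬ lt a a) ∧ (∀ a b c, lt a b → lt b c → lt a c) ∧
  (∀ a b, a ≠ b → lt a b ∨ lt b a) ∧
  (∀ u a b, lt a b → lt (a + u) (b + u)) ∧
  (∀ a, a ≠ (0 : Fin d → ℕ) → lt 0 a)

/-- Minimal generator of a GNS. -/
def IsMinGen {d : ℕ} (S : Set (Fin d → ℕ)) (x : Fin d → ℕ) : Prop :=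
  x ∈ S ∧ x ≠ 0 ∧ ∀ y ∈ S, ∀ z ∈ S, y ≠ 0 → z ≠ 0 → y + z ≠ x

/-- Irreducible GNS: not an intersection of two GNSs properly containing it. -/
def GNSIrreducible {d : ℕ} (S : Set (Fin d → ℕ)) : Prop :=
  ¬ ∃ S₁ S₂ : Set (Fin d → ℕ), IsGNS S₁ ∧ IsGNS S₂ ∧ S ⊂ S₁ ∧ S ⊂ S₂ ∧ S = S₁ ∩ S₂

/-- Pseudo-symmetric: `PF S = {f, f/2}`. -/
def PseudoSymmetric {d : ℕ} (S : Set (Fin d → ℕ)) : Prop :=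
  ∃ f q : Fin d → ℕ, f ≠ q ∧ q + q = f ∧ PF S = {f, q}

/-- A Frobenius GNS `(S, f)` is almost symmetric iff for every gap `h`,
either `f - h ∈ S` or `f - h ∈ PF(S)`. -/
theorem statement7 (d : ℕ) (hd : 0 < d) (S : Set (Fin d → ℕ)) (hS : IsGNS S)
    (f : Fin d → ℕ) (hf : IsFrobenius S f) :
    AlmostSymmetric S ↔
      ∀ h : Fin d → ℕ, h ∉ S →
        ((∃ s ∈ S, h + s = f) ∨ (∃ p ∈ PF S, h + p = f)) := by
  obtain ⟨hzero, hadd, hfin⟩ := hS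
  have hfmem : f ∈ Maximals (· ≤ ·) Sᶜ := by rw [hf]; rfl
  have hfgap : f ∉ S := hfmem.1
  have hfmax : ∀ y ∉ S, f ≤ y → f = y := fun y hy hle => hfmem.2 y hy hle
  have hgap_le : ∀ h, h ∉ S → h ≤ f := by
    intro h hh
    obtain ⟨m, hm, hmax⟩ := Set.Finite.exists_maximalFor id {y | y ∉ S ∧ h ≤ y}
      (hfin.subset (fun y hy => hy.1)) ⟨h, hh, le_refl h⟩
    have hmf : m ∈ Maximals (· ≤ ·) Sᶜ :=
      ⟨hm.1, fun y hy hmy => le_antisymm hmy (hmax ⟨hy, le_trans hm.2 hmy⟩ hmy)⟩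
    rw [hf] at hmf
    exact hmf ▸ hm.2
  have hsub_add : ∀ h : Fin d → ℕ, h ≤ f → h + (f - h) = f := by
    intro h hh; funext i
    exact Nat.add_sub_cancel' (hh i)
  have hsub_sub : ∀ h : Fin d → ℕ, h ≤ f → f - (f - h) = h := by
    intro h hh; funext i
    exact Nat.sub_sub_self (hh i)
  have hmirror : ∀ x, x ∈ S → x ≤ f → f - x ∉ S := by
    intro x hx hxf hc
    exact hfgap (hsub_add x hxf ▸ hadd x (f - x) hx hc)
  have hfPF : f ∈ PF S := by
    refine ⟨hfgap, fun s hs hs0 => ?_⟩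
    by_contra hfs
    have hE := hfmax (f + s) hfs le_self_add
    exact hs0 (left_eq_add.mp hE)
  set B : Set (Fin d → ℕ) := Set.Icc 0 f with hB
  set A : Set (Fin d → ℕ) := S ∩ B with hA
  set L : Set (Fin d → ℕ) := {h | h ∉ S ∧ f - h ∉ S} with hL
  have hBfin : B.Finite := Set.finite_Icc 0 f
  have hHsubB : Sᶜ ⊆ B := fun h hh => ⟨fun i => Nat.zero_le _, hgap_le h hh⟩
  have hAfin : A.Finite := hBfin.subset Set.inter_subset_right
  have hLfin : L.Finite := hfin.subset (fun h hh => hh.1)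
  have hPFfin : (PF S).Finite := hfin.subset (fun p hp => hp.1)
  have hBsplit : B = A ∪ Sᶜ := by
    ext x
    constructor
    · intro hx
      by_cases hxS : x ∈ S
      · exact Or.inl ⟨hxS, hx⟩
      · exact Or.inr hxS
    · rintro (⟨hx, hxB⟩ | hx)
      · exact hxB
      · exact hHsubB hx
  have hdisj1 : Disjoint A Sᶜ := Set.disjoint_left.mpr (fun x hx hxc => hxc hx.1)
  have hcard1 : B.ncard = A.ncard + Sᶜ.ncard := by
    rw [hBsplit]; exact Set.ncard_union_eq hdisj1 hAfin hfin
  have himg : (fun x => f - x) '' A ⊆ Sᶜ := by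
    rintro _ ⟨x, hx, rfl⟩
    exact hmirror x hx.1 hx.2.2
  have hHsplit : Sᶜ = ((fun x => f - x) '' A) ∪ L := by
    ext h
    constructor
    · intro hh
      by_cases hfh : f - h ∈ S
      · left
        exact ⟨f - h, ⟨hfh, ⟨fun i => Nat.zero_le _, fun i => Nat.sub_le _ _⟩⟩,
          hsub_sub h (hgap_le h hh)⟩
      · right; exact ⟨hh, hfh⟩
    · rintro (hh | hh)
      · exact himg hh
      · exact hh.1
  have hdisj2 : Disjoint ((fun x => f - x) '' A) L := by
    rw [Set.disjoint_left]
    rintro _ ⟨x, hx, rfl⟩ hL2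
    have hx' : f - (f - x) ∈ S := by rw [hsub_sub x hx.2.2]; exact hx.1
    exact hL2.2 hx'
  have hinj : Set.InjOn (fun x => f - x) A := by
    intro x hx y hy hxy
    have h2 : f - (f - x) = f - (f - y) := by simp only at hxy; rw [hxy]
    rwa [hsub_sub x hx.2.2, hsub_sub y hy.2.2] at h2
  have hcard2 : Sᶜ.ncard = A.ncard + L.ncard := by
    rw [hHsplit, Set.ncard_union_eq hdisj2 (hAfin.image _) hLfin,
      Set.ncard_image_of_injOn hinj]
  have hNB : B.ncard = ∏ i, (f i + 1) := by
    rw [hB, ← Finset.coe_Icc, Set.ncard_coe_finset, Pi.card_Icc]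
    simp [Nat.card_Icc]
  have hg : genus S = Sᶜ.ncard := rfl
  have hkey : 2 * genus S = (∏ i, (f i + 1)) + L.ncard := by
    rw [hg, ← hNB]; omega
  have hPFdiff : PF S \ {f} ⊆ L := by
    intro p hp
    have hpS : p ∉ S := hp.1.1
    have hpf : p ≤ f := hgap_le p hpS
    refine ⟨hpS, fun hc => ?_⟩
    have hne : f - p ≠ 0 := by
      intro h0
      apply hp.2
      have hle : f ≤ p := fun i => Nat.sub_eq_zero_iff_le.mp (congrFun h0 i)
      exact Set.mem_singleton_iff.mpr (le_antisymm hpf hle)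
    exact hfgap (hsub_add p hpf ▸ hp.1.2 (f - p) hc hne)
  have hff : f - f = (0 : Fin d → ℕ) := by funext i; exact Nat.sub_self _
  have hfL : f ∉ L := fun hc => hc.2 (hff.symm ▸ hzero)
  have htyp : typ S = (PF S \ {f}).ncard + 1 := by
    rw [typ]; exact (Set.ncard_diff_singleton_add_one hfPF hPFfin).symm
  have hcond_iff : (∀ h : Fin d → ℕ, h ∉ S →
      ((∃ s ∈ S, h + s = f) ∨ (∃ p ∈ PF S, h + p = f))) ↔ L ⊆ PF S := by
    constructor
    · intro hc h hhL
      have h1 : f - h ∉ S := hhL.2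
      have hle : h ≤ f := hgap_le h hhL.1
      have h2 : (f - h) + h = f := by rw [add_comm]; exact hsub_add h hle
      rcases hc (f - h) h1 with ⟨s, hs, hsum⟩ | ⟨p, hp, hsum⟩
      · exfalso
        have hsh : s = h := add_left_cancel (hsum.trans h2.symm)
        exact hhL.1 (hsh ▸ hs)
      · have hph : p = h := add_left_cancel (hsum.trans h2.symm)
        exact hph ▸ hp
    · intro hsub h hh
      have hle := hgap_le h hh
      by_cases hfh : f - h ∈ S
      · exact Or.inl ⟨f - h, hfh, hsub_add h hle⟩
      · refine Or.inr ⟨f - h, hsub ⟨hfh, ?_⟩, hsub_add h hle⟩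
        rw [hsub_sub h hle]; exact hh
  rw [hcond_iff]
  constructor
  · rintro ⟨h, hh, heq⟩
    have hhle := hgap_le h hh
    have hprodle : (∏ i, (h i + 1)) ≤ ∏ i, (f i + 1) :=
      Finset.prod_le_prod (fun i _ => Nat.zero_le _)
        (fun i _ => Nat.add_le_add_right (hhle i) 1)
    have hLge : (PF S \ {f}).ncard ≤ L.ncard := Set.ncard_le_ncard hPFdiff hLfin
    have hLle : L.ncard ≤ (PF S \ {f}).ncard := by omega
    have hLeq : PF S \ {f} = L := Set.eq_of_subset_of_ncard_le hPFdiff hLle hLfin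
    intro x hx
    rw [← hLeq] at hx
    exact hx.1
  · intro hsub
    have hLsub : L ⊆ PF S \ {f} := fun x hx => ⟨hsub hx, fun hc => hfL (hc ▸ hx)⟩
    have hLeq : PF S \ {f} = L := Set.Subset.antisymm hPFdiff hLsub
    have hcards : (PF S \ {f}).ncard = L.ncard := by rw [hLeq]
    exact ⟨f, hfgap, by omega⟩
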